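/- arXiv:2110.00789 — 7 statements merged into one kernel-verified Lean document; each statement's English description precedes it below -/
import Mathlib

section
/- Let D be a finite loopless directed graph. If D is source-free and has a kernel, then D has a quasi-kernel Q with 2·|Q| ≤ |V(D)|. -/
/-- A set is independent in the digraph with arc relation `A` if no two of its
vertices are connected by an arc in either direction. -/
def Independent {V : Type*} (A : V → V → Prop) (S : Set V) : Prop :=
  ∀ u ∈ S, ∀ v ∈ S, ¬ A u v

/-- A kernel: an independent set such that every vertex outside it has an
ingoing arc from the set. -/
def IsKernel {V : Type*} (A : V → V → Prop) (K : Set V) : Prop :=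
  Independent A K ∧ ∀ v ∉ K, ∃ u ∈ K, A u v

/-- A quasi-kernel: an independent set from which every vertex is reachable
in at most two steps. -/
def IsQuasiKernel {V : Type*} (A : V → V → Prop) (Q : Set V) : Prop :=
  Independent A Q ∧
    ∀ v : V, v ∈ Q ∨ (∃ u ∈ Q, A u v) ∨ (∃ u ∈ Q, ∃ w : V, A u w ∧ A w v)

/-- A set `Q` is inward dominated if every arc entering `Q` from outside is
answered by an arc from `Q` to its tail. -/
def InwardDominated {V : Type*} (A : V → V → Prop) (Q : Set V) : Prop :=
  ∀ w ∈ Q, ∀ v ∉ Q, A v w → ∃ u ∈ Q, A u v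

/-- `v` is an external private out-neighbor (epon) of `u` with regard to `S`. -/
def IsEpon {V : Type*} (A : V → V → Prop) (S : Set V) (u v : V) : Prop :=
  v ∉ S ∧ A u v ∧ ∀ w ∈ S, A w v → w = u

/-- `u` has an external private out-neighbor with regard to `S`. -/
def HasEpon {V : Type*} (A : V → V → Prop) (S : Set V) (u : V) : Prop :=
  ∃ v : V, IsEpon A S u v

/-- A digraph is source-free if every vertex has an ingoing arc. -/
def SourceFree {V : Type*} (A : V → V → Prop) : Prop :=
  ∀ v : V, ∃ u : V, A u v

/-- A source-free finite loopless digraph with a kernel has a quasi-kernel of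
size at most half the number of vertices. -/
theorem main_theorem {V : Type*} [Fintype V] (A : V → V → Prop)
    (hirr : Irreflexive A) (hsf : SourceFree A) (K : Set V)
    (hK : IsKernel A K) :
    ∃ Q : Set V, IsQuasiKernel A Q ∧ 2 * Q.ncard ≤ Fintype.card V := by
  classical
  set P : Set V → Prop := fun Q => Independent A Q ∧ InwardDominated A Q ∧
    ∀ v : V, v ∈ Q ∨ (∃ u ∈ Q, A u v) ∨ (∃ u ∈ Q, ∃ w : V, A u w ∧ A w v) with hP
  have hKP : P K := by
    obtain ⟨hKind, hKdom⟩ := hK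
    refine ⟨hKind, ?_, ?_⟩
    · intro w hw v hv hvw
      exact hKdom v hv
    · intro v
      by_cases hv : v ∈ K
      · exact Or.inl hv
      · obtain ⟨u, hu, huv⟩ := hKdom v hv
        exact Or.inr (Or.inl ⟨u, hu, huv⟩)
  have hex : ∃ n : ℕ, ∃ Q : Set V, P Q ∧ Q.ncard = n := ⟨K.ncard, K, hKP, rfl⟩
  obtain ⟨Q, hQ, hQn⟩ := Nat.find_spec hex
  have hmin : ∀ Q' : Set V, P Q' → Nat.find hex ≤ Q'.ncard := by
    intro Q' h
    exact Nat.find_min' hex ⟨Q', h, rfl⟩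
  obtain ⟨hQind, hQdom, hQcov⟩ := hQ
  -- every vertex of Q has an epon
  have hE : ∀ u ∈ Q, HasEpon A Q u := by
    intro u hu
    by_contra hne
    -- from no-epon: every outside out-neighbor of u has another in-neighbor in Q
    have key : ∀ v, v ∉ Q → A u v → ∃ w ∈ Q \ {u}, A w v := by
      intro v hv huv
      by_contra h
      push_neg at h
      exact hne ⟨v, hv, huv, fun w hw hwv => by
        by_contra hwu
        exact h w ⟨hw, hwu⟩ hwv⟩
    have hsub : Q \ {u} ⊆ Q := Set.diff_subset
    have hPQ' : P (Q \ {u}) := by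
      refine ⟨fun a ha b hb => hQind a (hsub ha) b (hsub hb), ?_, ?_⟩
      · -- inward dominated
        intro w hw v hv hvw
        have hvQ : v ∉ Q := by
          intro hvQ
          have hvu : v = u := by
            by_contra hvu
            exact hv ⟨hvQ, hvu⟩
          subst hvu
          exact hQind v hvQ w (hsub hw) hvw
        obtain ⟨x, hx, hxv⟩ := hQdom w (hsub hw) v hvQ hvw
        by_cases hxu : x = u
        · exact key v hvQ (hxu ▸ hxv)
        · exact ⟨x, ⟨hx, hxu⟩, hxv⟩
      · -- 2-covering
        intro v
        rcases hQcov v with hv | ⟨x, hx, hxv⟩ | ⟨x, hx, w, hxw, hwv⟩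
        · by_cases hvu : v = u
          · -- cover u itself in two steps
            subst hvu
            obtain ⟨p, hp⟩ := hsf v
            have hpQ : p ∉ Q := fun hpQ => hQind p hpQ v hv hp
            obtain ⟨x, hx, hxp⟩ := hQdom v hv p hpQ hp
            by_cases hxu : x = v
            · obtain ⟨w, hw, hwp⟩ := key p hpQ (hxu ▸ hxp)
              exact Or.inr (Or.inr ⟨w, hw, p, hwp, hp⟩)
            · exact Or.inr (Or.inr ⟨x, ⟨hx, hxu⟩, p, hxp, hp⟩)
          · exact Or.inl ⟨hv, hvu⟩
        · by_cases hxu : x = u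
          · subst hxu
            have hvQ : v ∉ Q := fun hvQ => hQind x hx v hvQ hxv
            obtain ⟨w, hw, hwv⟩ := key v hvQ hxv
            exact Or.inr (Or.inl ⟨w, hw, hwv⟩)
          · exact Or.inr (Or.inl ⟨x, ⟨hx, hxu⟩, hxv⟩)
        · by_cases hxu : x = u
          · subst hxu
            have hwQ : w ∉ Q := fun hwQ => hQind x hx w hwQ hxw
            obtain ⟨x', hx', hx'w⟩ := key w hwQ hxw
            exact Or.inr (Or.inr ⟨x', hx', w, hx'w, hwv⟩)
          · exact Or.inr (Or.inr ⟨x, ⟨hx, hxu⟩, w, hxw, hwv⟩)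
    have hlt : (Q \ {u}).ncard < Q.ncard :=
      Set.ncard_diff_singleton_lt_of_mem hu (Set.toFinite Q)
    have := hmin (Q \ {u}) hPQ'
    omega
  -- counting via epons
  have hEf : ∀ u : V, u ∈ Q → ∃ v : V, IsEpon A Q u v := fun u hu => hE u hu
  choose! f hf using hEf
  have hmaps : ∀ u ∈ Q, f u ∈ Qᶜ := fun u hu => (hf u hu).1
  have hinj : Set.InjOn f Q := by
    intro a ha b hb hab
    have := (hf b hb).2.2 a ha (hab ▸ (hf a ha).2.1)
    exact this
  have hle : Q.ncard ≤ (Qᶜ).ncard :=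
    Set.ncard_le_ncard_of_injOn f hmaps hinj (Set.toFinite _)
  have hcard : Q.ncard + (Qᶜ).ncard = Fintype.card V := by
    rw [← Nat.card_eq_fintype_card]
    exact Set.ncard_add_ncard_compl Q
  exact ⟨Q, ⟨hQind, hQcov⟩, by omega⟩
end

section
/- Let D be a finite loopless source-free directed graph. If D has an inward dominated quasi-kernel, then D has a quasi-kernel Q with 2·|Q| ≤ |V(D)|. -/
/-- A source-free finite loopless digraph with an inward dominated
quasi-kernel has a quasi-kernel of size at most half the number of vertices. -/
theorem inwardDominated_quasiKernel_half {V : Type*} [Fintype V]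
    (A : V → V → Prop) (hirr : Irreflexive A) (hsf : SourceFree A) (K : Set V)
    (hK : IsQuasiKernel A K) (hid : InwardDominated A K) :
    ∃ Q : Set V, IsQuasiKernel A Q ∧ 2 * Q.ncard ≤ Fintype.card V := by
  have main : ∀ n (S : Set V), S.ncard ≤ n → IsQuasiKernel A S → InwardDominated A S →
      ∃ Q : Set V, IsQuasiKernel A Q ∧ ∀ u ∈ Q, HasEpon A Q u := by
    intro n
    induction n with
    | zero =>
      intro S hcard hQK _
      have hS : S = ∅ := (Set.ncard_eq_zero (Set.toFinite S)).mp (Nat.le_zero.mp hcard)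
      subst hS
      exact ⟨∅, hQK, fun u hu => absurd hu (Set.notMem_empty u)⟩
    | succ n ih =>
      intro S hcard hQK hID
      by_cases hall : ∀ u ∈ S, HasEpon A S u
      · exact ⟨S, hQK, hall⟩
      push_neg at hall
      obtain ⟨w, hw, hnep⟩ := hall
      set S' := S \ {w} with hS'def
      have D1 : ∀ v, v ∉ S → A w v → ∃ u, (u ∈ S ∧ u ≠ w) ∧ A u v := by
        intro v hv hwv
        by_contra hcon
        push_neg at hcon
        exact hnep ⟨v, hv, hwv, fun x hx hxv =>
          by_contra fun hne => hcon x ⟨hx, hne⟩ hxv⟩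
      have hsub : S' ⊆ S := Set.diff_subset
      have hmem' : ∀ u, u ∈ S → u ≠ w → u ∈ S' := by
        intro u hu hne; exact ⟨hu, by simp [hne]⟩
      have D3 : ∀ x, x ∉ S → A w x → ∃ u ∈ S', A u x := by
        intro x hx hwx
        obtain ⟨u, ⟨huS, hune⟩, hux⟩ := D1 x hx hwx
        exact ⟨u, hmem' u huS hune, hux⟩
      have hind : Independent A S' := fun u hu v hv => hQK.1 u (hsub hu) v (hsub hv)
      have D2 : ∃ u ∈ S', ∃ x, A u x ∧ A x w := by
        obtain ⟨v, hvw⟩ := hsf w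
        have hvS : v ∉ S := fun hvS => hQK.1 v hvS w hw hvw
        obtain ⟨u, huS, huv⟩ := hID w hw v hvS hvw
        by_cases hu : u = w
        · subst hu
          obtain ⟨u', hu', hu'v⟩ := D3 v hvS huv
          exact ⟨u', hu', v, hu'v, hvw⟩
        · exact ⟨u, hmem' u huS hu, v, huv, hvw⟩
      have hQK' : IsQuasiKernel A S' := by
        refine ⟨hind, fun v => ?_⟩
        rcases hQK.2 v with hvS | ⟨u, huS, huv⟩ | ⟨u, huS, x, hux, hxv⟩
        · by_cases hvw : v = w
          · subst hvw
            exact Or.inr (Or.inr D2)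
          · exact Or.inl (hmem' v hvS hvw)
        · by_cases hu : u = w
          · subst hu
            have hvS : v ∉ S := fun hvS => hQK.1 u hw v hvS huv
            obtain ⟨u', hu', hu'v⟩ := D3 v hvS huv
            exact Or.inr (Or.inl ⟨u', hu', hu'v⟩)
          · exact Or.inr (Or.inl ⟨u, hmem' u huS hu, huv⟩)
        · by_cases hu : u = w
          · subst hu
            have hxS : x ∉ S := fun hxS => hQK.1 u hw x hxS hux
            obtain ⟨u', hu', hu'x⟩ := D3 x hxS hux
            exact Or.inr (Or.inr ⟨u', hu', x, hu'x, hxv⟩)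
          · exact Or.inr (Or.inr ⟨u, hmem' u huS hu, x, hux, hxv⟩)
      have hID' : InwardDominated A S' := by
        intro w' hw' v hv hvw'
        have hvS : v ∉ S := by
          intro hvS
          have hvw : v = w := by
            by_contra hne
            exact hv (hmem' v hvS hne)
          subst hvw
          exact hQK.1 v hvS w' (hsub hw') hvw'
        obtain ⟨u, huS, huv⟩ := hID w' (hsub hw') v hvS hvw'
        by_cases hu : u = w
        · subst hu
          exact D3 v hvS huv
        · exact ⟨u, hmem' u huS hu, huv⟩
      have hlt : S'.ncard < S.ncard :=
        Set.ncard_diff_singleton_lt_of_mem hw (Set.toFinite S)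
      exact ih S' (by omega) hQK' hID'
  obtain ⟨Q, hQ, hep⟩ := main K.ncard K le_rfl hK hid
  refine ⟨Q, hQ, ?_⟩
  classical
  set f : V → V := fun u => if h : HasEpon A Q u then Classical.choose h else u with hf
  have hfspec : ∀ u ∈ Q, IsEpon A Q u (f u) := by
    intro u hu
    have h := hep u hu
    simp only [hf, dif_pos h]
    exact Classical.choose_spec h
  have hmaps : ∀ u ∈ Q, f u ∈ Qᶜ := fun u hu => (hfspec u hu).1
  have hinj : Set.InjOn f Q := by
    intro u hu u' hu' heq
    have h1 := hfspec u hu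
    have h2 := hfspec u' hu'
    exact h2.2.2 u hu (heq ▸ h1.2.1)
  have hle : Q.ncard ≤ Qᶜ.ncard :=
    Set.ncard_le_ncard_of_injOn f hmaps hinj (Set.toFinite _)
  have hsum : Q.ncard + Qᶜ.ncard = Fintype.card V := by
    rw [← Nat.card_eq_fintype_card]
    exact Set.ncard_add_ncard_compl Q
  omega
end

section
/- Let D be a finite loopless source-free directed graph and let K be an inward dominated quasi-kernel of D. If u ∈ K has no external private out-neighbor with regard to K, then K − {u} is a quasi-kernel of D. -/
/-- In a source-free digraph, removing from an inward dominated quasi-kernel a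
vertex with no epon leaves a quasi-kernel. -/
theorem remove_no_epon_quasiKernel {V : Type*} [Fintype V] (A : V → V → Prop)
    (hirr : Irreflexive A) (hsf : SourceFree A) (K : Set V)
    (hK : IsQuasiKernel A K) (hid : InwardDominated A K) (u : V) (hu : u ∈ K)
    (hnep : ¬ HasEpon A K u) : IsQuasiKernel A (K \ {u}) := by
  obtain ⟨hind, hdom⟩ := hK
  -- key: for any w ∉ K with A u w, there is y ∈ K, y ≠ u, A y w
  have key : ∀ w, w ∉ K → A u w → ∃ y ∈ K, A y w ∧ y ≠ u := by
    intro w hwK huw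
    by_contra h
    push_neg at h
    exact hnep ⟨w, hwK, huw, fun x hx hxw => h x hx hxw⟩
  constructor
  · intro a ha b hb
    exact hind a ha.1 b hb.1
  · intro v
    by_cases hvu : v = u
    · obtain ⟨w, hw⟩ := hsf v
      have hwK : w ∉ K := fun hwk => hind w hwk u hu (hvu ▸ hw)
      obtain ⟨x, hxK, hxw⟩ := hid u hu w hwK (hvu ▸ hw)
      by_cases hxu : x = u
      · obtain ⟨y, hyK, hyw, hyu⟩ := key w hwK (hxu ▸ hxw)
        exact Or.inr (Or.inr ⟨y, ⟨hyK, hyu⟩, w, hyw, hw⟩)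
      · exact Or.inr (Or.inr ⟨x, ⟨hxK, hxu⟩, w, hxw, hw⟩)
    · by_cases hvK : v ∈ K
      · exact Or.inl ⟨hvK, hvu⟩
      · rcases hdom v with hv | ⟨x, hxK, hxv⟩ | ⟨x, hxK, w, hxw, hwv⟩
        · exact absurd hv hvK
        · by_cases hxu : x = u
          · obtain ⟨y, hyK, hyv, hyu⟩ := key v hvK (hxu ▸ hxv)
            exact Or.inr (Or.inl ⟨y, ⟨hyK, hyu⟩, hyv⟩)
          · exact Or.inr (Or.inl ⟨x, ⟨hxK, hxu⟩, hxv⟩)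
        · by_cases hxu : x = u
          · have hxw' : A u w := hxu ▸ hxw
            have hwK : w ∉ K := fun hwk => by
              by_cases hwu : w = u
              · exact hirr u (hwu ▸ hxw')
              · exact hind u hu w hwk hxw'
            obtain ⟨y, hyK, hyw, hyu⟩ := key w hwK hxw' 
            exact Or.inr (Or.inr ⟨y, ⟨hyK, hyu⟩, w, hyw, hwv⟩)
          · exact Or.inr (Or.inr ⟨x, ⟨hxK, hxu⟩, w, hxw, hwv⟩)
end

section
/- Let D be a finite loopless directed graph and let K be an inward dominated quasi-kernel of D. If u ∈ K has no external private out-neighbor with regard to K, then K − {u} is inward dominated; that is, for all v ∈ K − {u} and w ∈ V(D) − (K − {u}) with w ⟶ v, there exists y ∈ K − {u} such that y ⟶ w. -/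
/-- Removing from an inward dominated quasi-kernel a vertex with no epon
leaves an inward dominated set. -/
theorem remove_no_epon_inwardDominated {V : Type*} [Fintype V]
    (A : V → V → Prop) (hirr : Irreflexive A) (K : Set V)
    (hK : IsQuasiKernel A K) (hid : InwardDominated A K) (u : V) (hu : u ∈ K)
    (hnep : ¬ HasEpon A K u) : InwardDominated A (K \ {u}) := by
  intro v hv w hw haw
  obtain ⟨hvK, hvu⟩ := hv
  have hwK : w ∉ K := by
    intro hwK
    rcases eq_or_ne w u with rfl | hne
    · exact hK.1 w hwK v hvK haw
    · exact hw ⟨hwK, hne⟩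
  obtain ⟨x, hxK, hxw⟩ := hid v hvK w hwK haw
  rcases eq_or_ne x u with rfl | hne
  · by_contra hcon
    apply hnep
    refine ⟨w, hwK, hxw, fun z hzK hzw => ?_⟩
    by_contra hzu
    exact hcon ⟨z, ⟨hzK, hzu⟩, hzw⟩
  · exact ⟨x, ⟨hxK, hne⟩, hxw⟩
end

section
/- Let D be a finite loopless directed graph, let K ⊆ V(D), and let u ∈ K. Define S = {v ∈ K : v has no external private out-neighbor with regard to K} and R = {v ∈ K − {u} : v has no external private out-neighbor with regard to K − {u}}. If u ∈ S, then R ⊊ S, and hence |R| < |S|. -/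
/-- Removing a vertex with no epon strictly shrinks the set of vertices
without an epon. -/
theorem no_epon_set_shrinks {V : Type*} [Fintype V] (A : V → V → Prop)
    (hirr : Irreflexive A) (K : Set V) (u : V) (hu : u ∈ K)
    (S : Set V) (hS : S = {v ∈ K | ¬ HasEpon A K v})
    (R : Set V) (hR : R = {v ∈ K \ {u} | ¬ HasEpon A (K \ {u}) v})
    (huS : u ∈ S) : R ⊂ S ∧ R.ncard < S.ncard := by
  have hsub : R ⊂ S := by
    constructor
    · intro v hv
      rw [hR] at hv
      obtain ⟨⟨hvK, hvu⟩, hvne⟩ := hv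
      rw [hS]
      refine ⟨hvK, fun ⟨w, hwK, hAvw, hpriv⟩ => hvne ?_⟩
      exact ⟨w, fun ⟨hwK', _⟩ => hwK hwK', hAvw,
        fun x hx hAxw => hpriv x hx.1 hAxw⟩
    · intro hSR
      have := hSR huS
      rw [hR] at this
      exact this.1.2 rfl
  exact ⟨hsub, Set.ncard_lt_ncard hsub (Set.toFinite S)⟩
end

section
/- Let D be a finite loopless source-free directed graph and let K be an inward dominated quasi-kernel of D. If u ∈ K has no external private out-neighbor with regard to K, then there exists a vertex u' ∈ V(D) − K with u' ⟶ u and a vertex w ∈ K − {u} with w ⟶ u'; in particular, u is reachable in at most two steps from K − {u}. -/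
/-- In a source-free digraph, if `u` is a vertex of an inward dominated
quasi-kernel `K` with no epon with regard to `K`, then `u` is reachable in
exactly two steps from `K − {u}`: there are `u' ∉ K` with `u' ⟶ u` and
`w ∈ K − {u}` with `w ⟶ u'`. -/
theorem no_epon_two_step_reach {V : Type*} [Fintype V] (A : V → V → Prop)
    (hirr : Irreflexive A) (hsf : SourceFree A) (K : Set V)
    (hK : IsQuasiKernel A K) (hid : InwardDominated A K) (u : V) (hu : u ∈ K)
    (hnep : ¬ HasEpon A K u) :
    ∃ u' : V, u' ∉ K ∧ A u' u ∧ ∃ w ∈ K \ {u}, A w u' := by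
  obtain ⟨v, hv⟩ := hsf u
  have hvK : v ∉ K := fun hvK => hK.1 v hvK u hu hv
  by_cases h : ∃ w ∈ K, A w v ∧ w ≠ u
  · obtain ⟨w, hwK, hwv, hwu⟩ := h
    exact ⟨v, hvK, hv, w, ⟨hwK, hwu⟩, hwv⟩
  · exfalso
    push_neg at h
    obtain ⟨w, hwK, hwv⟩ := hid u hu v hvK hv
    have hwu : w = u := h w hwK hwv
    subst hwu
    exact hnep ⟨v, hvK, hwv, fun x hxK hxv => h x hxK hxv⟩
end

section
/- Let D be a finite loopless directed graph, let K be a quasi-kernel of D, let u ∈ K have no external private out-neighbor with regard to K, and let v ∈ V(D) − K with v ≠ u. Then v can be reached in at most two steps from a vertex of K − {u}. -/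
/-- If `u` is a vertex of a quasi-kernel `K` with no epon with regard to `K`,
then every vertex `v ∉ K` with `v ≠ u` can be reached in at most two steps
from a vertex of `K − {u}`. -/
theorem outside_vertex_two_step_reach {V : Type*} [Fintype V]
    (A : V → V → Prop) (hirr : Irreflexive A) (K : Set V)
    (hK : IsQuasiKernel A K) (u : V) (hu : u ∈ K) (hnep : ¬ HasEpon A K u)
    (v : V) (hv : v ∉ K) (hvu : v ≠ u) :
    (∃ x ∈ K \ {u}, A x v) ∨ (∃ x ∈ K \ {u}, ∃ w : V, A x w ∧ A w v) := by
  obtain ⟨hind, hreach⟩ := hK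
  rcases hreach v with h | ⟨x, hx, hxv⟩ | ⟨x, hx, w, hxw, hwv⟩
  · exact absurd h hv
  · by_cases hxu : x = u
    · subst hxu
      -- v is not an epon of u, but u → v and v ∉ K, so some other w ∈ K hits v
      have : ¬ (∀ w ∈ K, A w v → w = x) := fun hall => hnep ⟨v, hv, hxv, hall⟩
      push_neg at this
      obtain ⟨z, hz, hzv, hzu⟩ := this
      exact Or.inl ⟨z, ⟨hz, hzu⟩, hzv⟩
    · exact Or.inl ⟨x, ⟨hx, hxu⟩, hxv⟩
  · by_cases hxu : x = u
    · subst hxu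
      have hwK : w ∉ K := fun hwK => hind x hu w hwK hxw
      have : ¬ (∀ z ∈ K, A z w → z = x) := fun hall => hnep ⟨w, hwK, hxw, hall⟩
      push_neg at this
      obtain ⟨z, hz, hzw, hzu⟩ := this
      exact Or.inr ⟨z, ⟨hz, hzu⟩, w, hzw, hwv⟩
    · exact Or.inr ⟨x, ⟨hx, hxu⟩, w, hxw, hwv⟩
end
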